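/- For every c ∈ ℤ and t ∈ ℕ, the element [K,K̃;c;t] of D_v lies in the A-subalgebra D_A^0 of D_v generated by K, K⁻¹, K̃, K̃⁻¹ and the elements [K,K̃;t'] for all t' ∈ ℕ. -/

import Mathlib

noncomputable section

/-- Generators of the quantum double `D_q`. -/
inductive DGen : Type
  | E | F | K | Kinv | Kt | Ktinv
  deriving DecidableEq

/-- The defining relations of `D_q`. -/
inductive DRel (k : Type) [Field k] (q : k) :
    FreeAlgebra k DGen → FreeAlgebra k DGen → Prop
  | KE : DRel k q (FreeAlgebra.ι k DGen.K * FreeAlgebra.ι k DGen.E)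
      ((q ^ 2) • (FreeAlgebra.ι k DGen.E * FreeAlgebra.ι k DGen.K))
  | KF : DRel k q (FreeAlgebra.ι k DGen.K * FreeAlgebra.ι k DGen.F)
      (((q ^ 2)⁻¹) • (FreeAlgebra.ι k DGen.F * FreeAlgebra.ι k DGen.K))
  | KtE : DRel k q (FreeAlgebra.ι k DGen.Kt * FreeAlgebra.ι k DGen.E)
      ((q ^ 2) • (FreeAlgebra.ι k DGen.E * FreeAlgebra.ι k DGen.Kt))
  | KtF : DRel k q (FreeAlgebra.ι k DGen.Kt * FreeAlgebra.ι k DGen.F)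
      (((q ^ 2)⁻¹) • (FreeAlgebra.ι k DGen.F * FreeAlgebra.ι k DGen.Kt))
  | KKinv : DRel k q (FreeAlgebra.ι k DGen.K * FreeAlgebra.ι k DGen.Kinv) 1
  | KinvK : DRel k q (FreeAlgebra.ι k DGen.Kinv * FreeAlgebra.ι k DGen.K) 1
  | KtKtinv : DRel k q (FreeAlgebra.ι k DGen.Kt * FreeAlgebra.ι k DGen.Ktinv) 1
  | KtinvKt : DRel k q (FreeAlgebra.ι k DGen.Ktinv * FreeAlgebra.ι k DGen.Kt) 1
  | KKt : DRel k q (FreeAlgebra.ι k DGen.K * FreeAlgebra.ι k DGen.Kt)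
      (FreeAlgebra.ι k DGen.Kt * FreeAlgebra.ι k DGen.K)
  | EF : DRel k q (FreeAlgebra.ι k DGen.E * FreeAlgebra.ι k DGen.F)
      (FreeAlgebra.ι k DGen.F * FreeAlgebra.ι k DGen.E +
        ((q - q⁻¹)⁻¹) • (FreeAlgebra.ι k DGen.K - FreeAlgebra.ι k DGen.Ktinv))

/-- The quantum double `D_q` of `U_q(sl2)^{≤0}`, presented by generators and relations. -/
abbrev Dq (k : Type) [Field k] (q : k) := RingQuot (DRel k q)

def DE (k : Type) [Field k] (q : k) : Dq k q :=
  RingQuot.mkAlgHom k (DRel k q) (FreeAlgebra.ι k DGen.E)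
def DF (k : Type) [Field k] (q : k) : Dq k q :=
  RingQuot.mkAlgHom k (DRel k q) (FreeAlgebra.ι k DGen.F)
def DK (k : Type) [Field k] (q : k) : Dq k q :=
  RingQuot.mkAlgHom k (DRel k q) (FreeAlgebra.ι k DGen.K)
def DKinv (k : Type) [Field k] (q : k) : Dq k q :=
  RingQuot.mkAlgHom k (DRel k q) (FreeAlgebra.ι k DGen.Kinv)
def DKt (k : Type) [Field k] (q : k) : Dq k q :=
  RingQuot.mkAlgHom k (DRel k q) (FreeAlgebra.ι k DGen.Kt)
def DKtinv (k : Type) [Field k] (q : k) : Dq k q :=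
  RingQuot.mkAlgHom k (DRel k q) (FreeAlgebra.ι k DGen.Ktinv)

/-- The quantum integer `[n]_q = (qⁿ - q⁻ⁿ)/(q - q⁻¹)`. -/
def qint (k : Type) [Field k] (q : k) (n : ℕ) : k := (q ^ n - q⁻¹ ^ n) / (q - q⁻¹)

/-- The quantum factorial `[n]_q!`. -/
def qfact (k : Type) [Field k] (q : k) : ℕ → k
  | 0 => 1
  | n + 1 => qfact k q n * qint k q (n + 1)

/-- The Gaussian binomial coefficient `[m choose n]_q`. -/
def qbinom (k : Type) [Field k] (q : k) (m n : ℕ) : k :=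
  qfact k q m / (qfact k q n * qfact k q (m - n))

/-- The element `[K,K̃;c;t] = ∏_{s=1}^t (K q^{c-s+1} - K̃⁻¹ q^{-c+s-1})/(q^s - q^{-s})` of `D_q`. -/
def KKtc (k : Type) [Field k] (q : k) (c : ℤ) : ℕ → Dq k q
  | 0 => 1
  | t + 1 =>
      KKtc k q c t *
        ((q ^ ((t : ℤ) + 1) - q ^ (-((t : ℤ) + 1)))⁻¹ •
          (q ^ (c - (t : ℤ)) • DK k q - q ^ ((t : ℤ) - c) • DKtinv k q))

/-- The field `ℚ(v)`, realized as the fraction field of `ℤ[v]`. -/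
abbrev Qv : Type := FractionRing (Polynomial ℤ)

/-- The indeterminate `v ∈ ℚ(v)`. -/
def vv : Qv := algebraMap (Polynomial ℤ) Qv Polynomial.X

/-- The subring `A = ℤ[v, v⁻¹]` of `ℚ(v)`. -/
def Asub : Subring Qv := Subring.closure {vv, vv⁻¹}

/-- The `A`-subalgebra `D_A^0` of `D_v` generated by `K^{±1}, K̃^{±1}` and all
`[K,K̃;t']`, realized as the subring generated by these elements together with
the scalars `a • 1`, `a ∈ A`. -/
def DA0 : Subring (Dq Qv vv) :=
  Subring.closure
    ((fun a : Qv => a • (1 : Dq Qv vv)) '' (Asub : Set Qv) ∪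
      ({DK Qv vv, DKinv Qv vv, DKt Qv vv, DKtinv Qv vv} ∪
        {x | ∃ t' : ℕ, x = KKtc Qv vv 0 t'}))


-- ===== auxiliary lemmas =====

lemma vv_ne_zero : vv ≠ 0 := by
  intro h
  have h2 : algebraMap (Polynomial ℤ) Qv Polynomial.X = algebraMap (Polynomial ℤ) Qv 0 := by
    simpa [vv] using h
  have h3 := IsFractionRing.injective (Polynomial ℤ) Qv h2
  simp at h3

lemma vv_pow_ne_one (n : ℕ) (hn : n ≠ 0) : vv ^ n ≠ 1 := by
  intro h
  have h2 : algebraMap (Polynomial ℤ) Qv (Polynomial.X ^ n) =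
      algebraMap (Polynomial ℤ) Qv 1 := by
    simpa [vv, map_pow] using h
  have h3 := IsFractionRing.injective (Polynomial ℤ) Qv h2
  have := congrArg Polynomial.natDegree h3
  simp [Polynomial.natDegree_X_pow, hn] at this

lemma dd_ne (t : ℕ) : vv ^ ((t : ℤ) + 1) - vv ^ (-((t : ℤ) + 1)) ≠ 0 := by
  intro h
  have hq := vv_ne_zero
  have h1 : vv ^ ((t : ℤ) + 1) = vv ^ (-((t : ℤ) + 1)) := sub_eq_zero.mp h
  have h2 : vv ^ ((t : ℤ) + 1) * vv ^ ((t : ℤ) + 1) = 1 := by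
    nth_rewrite 2 [h1]
    rw [← zpow_add₀ hq, add_neg_cancel, zpow_zero]
  have h3 : vv ^ (2 * (t + 1)) = 1 := by
    rw [← zpow_natCast]
    push_cast
    rw [two_mul, zpow_add₀ hq]
    exact h2
  exact vv_pow_ne_one _ (by positivity) h3


lemma zp (a b : ℤ) : vv ^ a * vv ^ b = vv ^ (a + b) := (zpow_add₀ vv_ne_zero a b).symm

lemma DKt_mul_DKtinv : DKt Qv vv * DKtinv Qv vv = 1 := by
  have h := RingQuot.mkAlgHom_rel Qv (DRel.KtKtinv (k := Qv) (q := vv))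
  simpa [DKt, DKtinv, map_mul, map_one] using h

lemma DKtinv_mul_DKt : DKtinv Qv vv * DKt Qv vv = 1 := by
  have h := RingQuot.mkAlgHom_rel Qv (DRel.KtinvKt (k := Qv) (q := vv))
  simpa [DKt, DKtinv, map_mul, map_one] using h

lemma DK_mul_DKt : DK Qv vv * DKt Qv vv = DKt Qv vv * DK Qv vv := by
  have h := RingQuot.mkAlgHom_rel Qv (DRel.KKt (k := Qv) (q := vv))
  simpa [DK, DKt, map_mul] using h

lemma DKtinv_comm_DK : DKtinv Qv vv * DK Qv vv = DK Qv vv * DKtinv Qv vv := by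
  calc DKtinv Qv vv * DK Qv vv
      = DKtinv Qv vv * DK Qv vv * (DKt Qv vv * DKtinv Qv vv) := by
        rw [DKt_mul_DKtinv, mul_one]
    _ = DKtinv Qv vv * (DK Qv vv * DKt Qv vv) * DKtinv Qv vv := by
        noncomm_ring
    _ = DKtinv Qv vv * (DKt Qv vv * DK Qv vv) * DKtinv Qv vv := by
        rw [DK_mul_DKt]
    _ = (DKtinv Qv vv * DKt Qv vv) * (DK Qv vv * DKtinv Qv vv) := by
        noncomm_ring
    _ = DK Qv vv * DKtinv Qv vv := by rw [DKtinv_mul_DKt, one_mul]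

lemma factor_comm_K (a b : Qv) :
    (a • DK Qv vv - b • DKtinv Qv vv) * DK Qv vv
      = DK Qv vv * (a • DK Qv vv - b • DKtinv Qv vv) := by
  simp only [sub_mul, mul_sub, smul_mul_assoc, mul_smul_comm, DKtinv_comm_DK]

lemma factor_comm_Ktinv (a b : Qv) :
    (a • DK Qv vv - b • DKtinv Qv vv) * DKtinv Qv vv
      = DKtinv Qv vv * (a • DK Qv vv - b • DKtinv Qv vv) := by
  simp only [sub_mul, mul_sub, smul_mul_assoc, mul_smul_comm, DKtinv_comm_DK]

/-- Linear combinations of `K` and `K̃⁻¹` commute. -/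
lemma KKt_factor_comm (a b a' b' : Qv) :
    (a • DK Qv vv - b • DKtinv Qv vv) * (a' • DK Qv vv - b' • DKtinv Qv vv)
      = (a' • DK Qv vv - b' • DKtinv Qv vv) * (a • DK Qv vv - b • DKtinv Qv vv) := by
  conv_lhs => rw [mul_sub, mul_smul_comm, mul_smul_comm, factor_comm_K a b,
    factor_comm_Ktinv a b, ← smul_mul_assoc, ← smul_mul_assoc, ← sub_mul]

lemma vv_mem_Asub : vv ∈ Asub := Subring.subset_closure (by simp [Asub])

lemma vv_inv_mem_Asub : vv⁻¹ ∈ Asub := Subring.subset_closure (by simp [Asub])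

lemma vv_zpow_mem_Asub (n : ℤ) : vv ^ n ∈ Asub := by
  obtain ⟨m, rfl | rfl⟩ := Int.eq_nat_or_neg n
  · rw [zpow_natCast]; exact pow_mem vv_mem_Asub m
  · rw [zpow_neg, ← inv_zpow, zpow_natCast]; exact pow_mem vv_inv_mem_Asub m

lemma smul_one_mem_DA0 (n : ℤ) : (vv ^ n) • (1 : Dq Qv vv) ∈ DA0 :=
  Subring.subset_closure (Or.inl ⟨vv ^ n, vv_zpow_mem_Asub n, rfl⟩)

lemma zpow_smul_mem_DA0 {x : Dq Qv vv} (hx : x ∈ DA0) (n : ℤ) : (vv ^ n) • x ∈ DA0 := by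
  have h : (vv ^ n) • x = ((vv ^ n) • (1 : Dq Qv vv)) * x := by
    rw [smul_mul_assoc, one_mul]
  rw [h]
  exact mul_mem (smul_one_mem_DA0 n) hx

lemma DK_mem_DA0 : DK Qv vv ∈ DA0 :=
  Subring.subset_closure (Or.inr (Or.inl (by simp)))

lemma DKtinv_mem_DA0 : DKtinv Qv vv ∈ DA0 :=
  Subring.subset_closure (Or.inr (Or.inl (by simp)))

lemma KKtc0_mem_DA0 (t : ℕ) : KKtc Qv vv 0 t ∈ DA0 :=
  Subring.subset_closure (Or.inr (Or.inr ⟨t, rfl⟩))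

/-- Key reorganization lemma. -/
lemma lemA (c : ℤ) (t : ℕ) :
    KKtc Qv vv (c + 1) (t + 1)
      = (vv ^ ((t : ℤ) + 1) - vv ^ (-((t : ℤ) + 1)))⁻¹ •
        (KKtc Qv vv c t *
          (vv ^ (c + 1) • DK Qv vv - vv ^ (-(c + 1)) • DKtinv Qv vv)) := by
  induction t with
  | zero =>
      have h1 : c + 1 - ((0 : ℕ) : ℤ) = c + 1 := by push_cast; ring
      have h2 : ((0 : ℕ) : ℤ) - (c + 1) = -(c + 1) := by push_cast; ring
      rw [KKtc, KKtc, h1, h2, one_mul, mul_smul_comm, KKtc, one_mul]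
  | succ t ih =>
      have h1 : c + 1 - (((t + 1 : ℕ)) : ℤ) = c - (t : ℤ) := by push_cast; ring
      have h2 : (((t + 1 : ℕ)) : ℤ) - (c + 1) = (t : ℤ) - c := by push_cast; ring
      have h3 : (((t + 1 : ℕ)) : ℤ) + 1 = ((t : ℤ) + 1) + 1 := by push_cast; ring
      rw [KKtc, ih, h1, h2, h3]
      conv_rhs => rw [KKtc]
      simp only [smul_mul_assoc, mul_smul_comm, smul_smul, mul_assoc]
      rw [KKt_factor_comm]

/-- Upward recursion identity. -/
lemma lemB (c : ℤ) (t : ℕ) :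
    KKtc Qv vv (c + 1) (t + 1)
      = vv ^ ((t : ℤ) + 1) • KKtc Qv vv c (t + 1)
        + vv ^ ((t : ℤ) - c) • (KKtc Qv vv c t * DKtinv Qv vv) := by
  have hq := vv_ne_zero
  have hd := dd_ne t
  have hdd : (vv ^ ((t : ℤ) + 1) - vv ^ (-((t : ℤ) + 1)))⁻¹ *
      (vv ^ ((t : ℤ) + 1) - vv ^ (-((t : ℤ) + 1))) = 1 := inv_mul_cancel₀ hd
  have key : (vv ^ ((t : ℤ) + 1) - vv ^ (-((t : ℤ) + 1)))⁻¹ •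
        (vv ^ (c + 1) • DK Qv vv - vv ^ (-(c + 1)) • DKtinv Qv vv)
      = vv ^ ((t : ℤ) + 1) •
          ((vv ^ ((t : ℤ) + 1) - vv ^ (-((t : ℤ) + 1)))⁻¹ •
            (vv ^ (c - (t : ℤ)) • DK Qv vv - vv ^ ((t : ℤ) - c) • DKtinv Qv vv))
        + vv ^ ((t : ℤ) - c) • DKtinv Qv vv := by
    have hXB : vv ^ ((t : ℤ) + 1) * vv ^ (c - (t : ℤ)) = vv ^ (c + 1) := by
      rw [← zpow_add₀ hq]; ring_nf
    have hBY : vv ^ ((t : ℤ) - c) * vv ^ (-((t : ℤ) + 1)) = vv ^ (-(c + 1)) := by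
      rw [← zpow_add₀ hq]; ring_nf
    simp only [smul_sub, smul_smul]
    rw [sub_add, ← sub_smul]
    congr 1
    · congr 1
      linear_combination (-((vv ^ ((t : ℤ) + 1) - vv ^ (-((t : ℤ) + 1)))⁻¹)) * hXB
    · congr 1
      linear_combination (-((vv ^ ((t : ℤ) + 1) - vv ^ (-((t : ℤ) + 1)))⁻¹)) * hBY
        - vv ^ ((t : ℤ) - c) * hdd
  rw [lemA]
  conv_rhs => rw [KKtc]
  rw [← mul_smul_comm, key, mul_add]
  simp only [mul_smul_comm]

/-- Downward-facing recursion identity. -/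
lemma lemC (c : ℤ) (t : ℕ) :
    KKtc Qv vv (c + 1) (t + 1)
      = vv ^ (-((t : ℤ) + 1)) • KKtc Qv vv c (t + 1)
        + vv ^ (c - (t : ℤ)) • (KKtc Qv vv c t * DK Qv vv) := by
  have hq := vv_ne_zero
  have hd := dd_ne t
  have hdd : (vv ^ ((t : ℤ) + 1) - vv ^ (-((t : ℤ) + 1)))⁻¹ *
      (vv ^ ((t : ℤ) + 1) - vv ^ (-((t : ℤ) + 1))) = 1 := inv_mul_cancel₀ hd
  have key : (vv ^ ((t : ℤ) + 1) - vv ^ (-((t : ℤ) + 1)))⁻¹ •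
        (vv ^ (c + 1) • DK Qv vv - vv ^ (-(c + 1)) • DKtinv Qv vv)
      = vv ^ (-((t : ℤ) + 1)) •
          ((vv ^ ((t : ℤ) + 1) - vv ^ (-((t : ℤ) + 1)))⁻¹ •
            (vv ^ (c - (t : ℤ)) • DK Qv vv - vv ^ ((t : ℤ) - c) • DKtinv Qv vv))
        + vv ^ (c - (t : ℤ)) • DK Qv vv := by
    have hBX : vv ^ (c - (t : ℤ)) * vv ^ ((t : ℤ) + 1) = vv ^ (c + 1) := by
      rw [← zpow_add₀ hq]; ring_nf
    have hYB : vv ^ (-((t : ℤ) + 1)) * vv ^ ((t : ℤ) - c) = vv ^ (-(c + 1)) := by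
      rw [← zpow_add₀ hq]; ring_nf
    simp only [smul_sub, smul_smul]
    rw [sub_add_eq_add_sub, ← add_smul]
    congr 1
    · congr 1
      linear_combination (-((vv ^ ((t : ℤ) + 1) - vv ^ (-((t : ℤ) + 1)))⁻¹)) * hBX
        + vv ^ (c - (t : ℤ)) * hdd
    · congr 1
      linear_combination (-((vv ^ ((t : ℤ) + 1) - vv ^ (-((t : ℤ) + 1)))⁻¹)) * hYB
  rw [lemA]
  conv_rhs => rw [KKtc]
  rw [← mul_smul_comm, key, mul_add]
  simp only [mul_smul_comm]

/-- Downward recursion, solved form. -/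
lemma lemD (c : ℤ) (t : ℕ) :
    KKtc Qv vv (c - 1) (t + 1)
      = vv ^ ((t : ℤ) + 1) • KKtc Qv vv c (t + 1)
        - vv ^ c • (KKtc Qv vv (c - 1) t * DK Qv vv) := by
  have hq := vv_ne_zero
  have h := lemC (c - 1) t
  rw [sub_add_cancel] at h
  rw [h, smul_add, smul_smul, smul_smul, ← zpow_add₀ hq, ← zpow_add₀ hq]
  have e1 : (t : ℤ) + 1 + -((t : ℤ) + 1) = 0 := by ring
  have e2 : (t : ℤ) + 1 + (c - 1 - (t : ℤ)) = c := by ring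
  rw [e1, e2, zpow_zero, one_smul]
  abel

/-- for every `c : ℤ` and `t : ℕ`, the element `[K,K̃;c;t]` of `D_v`
lies in the `A`-subalgebra `D_A^0`. -/
theorem KKtc_mem_DA0 (c : ℤ) (t : ℕ) : KKtc Qv vv c t ∈ DA0 := by
  induction t generalizing c with
  | zero => rw [KKtc]; exact one_mem _
  | succ t ih =>
      induction c using Int.induction_on with
      | zero => exact KKtc0_mem_DA0 (t + 1)
      | succ i hi =>
          rw [lemB]
          exact add_mem (zpow_smul_mem_DA0 hi _)
            (zpow_smul_mem_DA0 (mul_mem (ih _) DKtinv_mem_DA0) _)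
      | pred i hi =>
          rw [lemD]
          exact sub_mem (zpow_smul_mem_DA0 hi _)
            (zpow_smul_mem_DA0 (mul_mem (ih _) DK_mem_DA0) _)
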